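/- Let G be a finite abelian group of order n and let k be a field containing a primitive n-th root of unity. Then the diagonal algebra k^n (functions from an n-element set to k with pointwise operations) admits a connected grading by G in which every homogeneous component is one-dimensional; in particular the support of this grading is all of G. -/
import Mathlib


/-- Let `G` be a finite abelian group of order `n` and `k` a field containing a primitive
`n`-th root of unity.  Then the diagonal algebra `k^n` admits a connected grading by `G`
in which every homogeneous component is one-dimensional; in particular the support is all
of `G`. -/
theorem stmt10 (G : Type*) [CommGroup G] [Fintype G] (n : ℕ) (hn : Fintype.card G = n)
    (k : Type*) [Field k] (q : k) (hq : IsPrimitiveRoot q n) :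
    ∃ X : G → Submodule k (Fin n → k),
      iSupIndep X ∧ (⨆ g, X g) = ⊤ ∧
      (∀ g h, X g * X h ≤ X (g * h)) ∧
      (∀ g, Module.finrank k (X g) = 1) ∧
      {g | X g ≠ ⊥} = Set.univ ∧
      Subgroup.closure {g | X g ≠ ⊥} = ⊤ := by
  classical
  have hn0 : 0 < n := hn ▸ Fintype.card_pos
  haveI : NeZero n := ⟨hn0.ne'⟩
  have hdvd : Monoid.exponent G ∣ n := hn ▸ Group.exponent_dvd_card
  haveI hk : HasEnoughRootsOfUnity k n :=
    { prim := ⟨q, hq⟩, cyc := rootsOfUnity.isCyclic k n }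
  haveI hkG : HasEnoughRootsOfUnity k (Monoid.exponent G) :=
    HasEnoughRootsOfUnity.of_dvd k hdvd
  -- an isomorphism between `G` and its character group
  obtain ⟨χ₀⟩ := CommGroup.monoidHom_mulEquiv_of_hasEnoughRootsOfUnity G k
  set χ : G ≃* (G →* kˣ) := χ₀.symm with hχ
  -- an identification of `Fin n` with `G`
  have e : Fin n ≃ G := (Fintype.equivFinOfCardEq hn).symm
  -- the homogeneous components are spanned by characters
  set v : G → (Fin n → k) := fun g i => (χ g (e i) : k) with hv
  -- the family of characters (as `k`-valued functions on `G`) is linearly independent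
  have hinj : Function.Injective (fun g => (Units.coeHom k).comp (χ g) : G → (G →* k)) := by
    intro a b hab
    apply χ.injective
    ext x
    exact congrArg (fun f : G →* k => f x) hab
  have hliG : LinearIndependent k
      (fun g => ((Units.coeHom k).comp (χ g) : G → k)) :=
    (linearIndependent_monoidHom G k).comp _ hinj
  -- transport along `e` to `Fin n → k`
  let E : (G → k) ≃ₗ[k] (Fin n → k) := LinearEquiv.funCongrLeft k k e
  have hvE : ∀ g, v g = E ((Units.coeHom k).comp (χ g) : G → k) := by
    intro g; rfl
  have hli : LinearIndependent k v := hliG.map' E.toLinearMap E.ker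
  have hv0 : ∀ g, v g ≠ 0 := fun g => hli.ne_zero g
  refine ⟨fun g => Submodule.span k {v g}, ?_, ?_, ?_, ?_, ?_, ?_⟩
  · simpa [Submodule.span_singleton_eq_range] using hli.iSupIndep_span_singleton
  · -- spans everything: `n` independent vectors in an `n`-dimensional space
    have hcard : Fintype.card G = Module.finrank k (Fin n → k) := by
      simp [hn]
    have := hli.span_eq_top_of_card_eq_finrank hcard
    rw [← this, Submodule.span_range_eq_iSup]
  · intro g h
    rw [Submodule.span_mul_span, Set.singleton_mul_singleton]
    apply Submodule.span_mono
    intro x hx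
    rcases hx with rfl
    have : v g * v h = v (g * h) := by
      funext i
      simp only [hv, Pi.mul_apply, map_mul, MonoidHom.mul_apply, Units.val_mul]
    rw [this]
    exact rfl
  · intro g
    exact finrank_span_singleton (hv0 g)
  · ext g
    simp [Submodule.span_singleton_eq_bot, hv0 g]
  · have : {g : G | Submodule.span k {v g} ≠ ⊥} = Set.univ := by
      ext g
      simp [Submodule.span_singleton_eq_bot, hv0 g]
    rw [this, Subgroup.closure_univ]
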